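/- Let A be an m×n real matrix, and let θ, ρ, r, s be real numbers with ρ ≤ 1, r > 0, s > 0, and r·s > ‖AᵀA‖₂ (the spectral norm of AᵀA). Then the (n+m)×(n+m) block matrix G = [[r·Iₙ + ((θ−1)² − ρ)/s · AᵀA, (θ−1)·Aᵀ], [(θ−1)·A, s·I_m]] is symmetric positive definite. -/

import Mathlib

open Matrix

private lemma dps_pos {k : ℕ} (v : Fin k → ℝ) : 0 < v ⬝ᵥ v ↔ v ≠ 0 := by
  constructor
  · intro h hv; rw [hv] at h; simp at h
  · intro hv
    rcases lt_or_eq_of_le (Finset.sum_nonneg (fun i _ => mul_self_nonneg (v i)) :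
      (0:ℝ) ≤ v ⬝ᵥ v) with h | h
    · exact h
    · exact absurd (dotProduct_self_eq_zero.mp h.symm) hv

/-- The multi-parameterized proximal matrix `G` of the paper is symmetric
positive definite whenever `ρ ≤ 1`, `r > 0`, `s > 0` and `r·s > ‖AᵀA‖₂`,
where the spectral norm `N = ‖AᵀA‖₂ = λ_max(AᵀA)` is characterized as the
greatest value of the Rayleigh quotient `‖Au‖²` over unit vectors `u`. -/
theorem stmt0_proximal_matrix_posDef
    (m n : ℕ) (A : Matrix (Fin m) (Fin n) ℝ) (θ ρ r s N : ℝ)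
    (hρ : ρ ≤ 1) (hr : 0 < r) (hs : 0 < s)
    (hN : IsGreatest {t : ℝ | ∃ u : Fin n → ℝ, u ⬝ᵥ u = 1 ∧ t = A.mulVec u ⬝ᵥ A.mulVec u} N)
    (hrs : N < r * s) :
    (Matrix.fromBlocks
      (r • (1 : Matrix (Fin n) (Fin n) ℝ) + (((θ - 1) ^ 2 - ρ) / s) • (Aᵀ * A))
      ((θ - 1) • Aᵀ)
      ((θ - 1) • A)
      (s • (1 : Matrix (Fin m) (Fin m) ℝ))).PosDef := by
  -- the key Rayleigh-quotient bound
  have hNnn : 0 ≤ N := by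
    obtain ⟨u, -, ht⟩ := hN.1
    exact ht ▸ Finset.sum_nonneg (fun i _ => mul_self_nonneg _)
  have key : ∀ u : Fin n → ℝ, A.mulVec u ⬝ᵥ A.mulVec u ≤ N * (u ⬝ᵥ u) := by
    intro u
    rcases eq_or_ne u 0 with rfl | hu
    · simp
    · have hpos : 0 < u ⬝ᵥ u := (dps_pos _).mpr hu
      set c : ℝ := Real.sqrt (u ⬝ᵥ u) with hc
      have hcpos : 0 < c := Real.sqrt_pos.mpr hpos
      have hc2 : c * c = u ⬝ᵥ u := Real.mul_self_sqrt hpos.le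
      have hunit : (c⁻¹ • u) ⬝ᵥ (c⁻¹ • u) = 1 := by
        rw [smul_dotProduct, dotProduct_smul, smul_eq_mul, smul_eq_mul, ← hc2]
        field_simp
      have hb := hN.2 ⟨c⁻¹ • u, hunit, rfl⟩
      have hAs : A.mulVec (c⁻¹ • u) ⬝ᵥ A.mulVec (c⁻¹ • u)
          = c⁻¹ * c⁻¹ * (A.mulVec u ⬝ᵥ A.mulVec u) := by
        rw [mulVec_smul, smul_dotProduct, dotProduct_smul, smul_eq_mul, smul_eq_mul]
        ring
      rw [hAs] at hb
      have := mul_le_mul_of_nonneg_left hb (le_of_lt (mul_pos hcpos hcpos))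
      calc A.mulVec u ⬝ᵥ A.mulVec u
          = c * c * (c⁻¹ * c⁻¹ * (A.mulVec u ⬝ᵥ A.mulVec u)) := by
            field_simp
        _ ≤ c * c * N := this
        _ = N * (u ⬝ᵥ u) := by rw [hc2]; ring
  rw [posDef_iff_dotProduct_mulVec]
  constructor
  · -- Hermitian
    simp only [Matrix.IsHermitian, fromBlocks_conjTranspose,
      conjTranspose_eq_transpose_of_trivial, transpose_add, transpose_smul,
      transpose_mul, transpose_transpose, transpose_one, fromBlocks_transpose]
  · intro x hx
    set u : Fin n → ℝ := x ∘ Sum.inl with hu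
    set v : Fin m → ℝ := x ∘ Sum.inr with hv
    have hxe : x = Sum.elim u v := (Sum.elim_comp_inl_inr x).symm
    rw [hxe]
    rw [show (star (Sum.elim u v)) = Sum.elim u v from rfl]
    rw [fromBlocks_mulVec, sumElim_dotProduct_sumElim]
    simp only [Sum.elim_comp_inl, Sum.elim_comp_inr]
    set a := u ⬝ᵥ u with ha
    set b := A.mulVec u ⬝ᵥ A.mulVec u with hb
    set c := v ⬝ᵥ A.mulVec u with hcv
    set d := v ⬝ᵥ v with hd
    have expand : u ⬝ᵥ ((r • (1 : Matrix (Fin n) (Fin n) ℝ)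
          + (((θ - 1) ^ 2 - ρ) / s) • (Aᵀ * A)) *ᵥ u + ((θ - 1) • Aᵀ) *ᵥ v)
        + v ⬝ᵥ (((θ - 1) • A) *ᵥ u + (s • (1 : Matrix (Fin m) (Fin m) ℝ)) *ᵥ v)
        = r * a + ((θ - 1) ^ 2 - ρ) / s * b + 2 * (θ - 1) * c + s * d := by
      have h1 : u ⬝ᵥ ((Aᵀ * A) *ᵥ u) = b := by
        rw [← mulVec_mulVec, hb, dotProduct_mulVec, vecMul_transpose]
      have h2 : u ⬝ᵥ (Aᵀ *ᵥ v) = c := by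
        rw [hcv, dotProduct_mulVec, vecMul_transpose, dotProduct_comm]
      simp only [add_mulVec, smul_mulVec, one_mulVec, dotProduct_add,
        dotProduct_smul, smul_eq_mul, h1, h2, ha, hcv, hd]
      ring
    rw [expand]
    -- complete the square: let w = (θ-1) • A.mulVec u + s • v
    have hw : 0 ≤ ((θ - 1) • A.mulVec u + s • v) ⬝ᵥ ((θ - 1) • A.mulVec u + s • v) :=
      Finset.sum_nonneg (fun i _ => mul_self_nonneg _)
    have hwexp : ((θ - 1) • A.mulVec u + s • v) ⬝ᵥ ((θ - 1) • A.mulVec u + s • v)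
        = (θ - 1) ^ 2 * b + 2 * (θ - 1) * s * c + s ^ 2 * d := by
      simp only [dotProduct_add, add_dotProduct, smul_dotProduct, dotProduct_smul,
        smul_eq_mul, hb, hcv, hd]
      rw [dotProduct_comm (A.mulVec u) v]
      ring
    rw [hwexp] at hw
    have hbnn : 0 ≤ b := Finset.sum_nonneg (fun i _ => mul_self_nonneg _)
    rcases eq_or_ne u 0 with hu0 | hu0
    · have hv0 : v ≠ 0 := by
        intro hv0
        apply hx
        rw [hxe, hu0, hv0]
        ext (i | i) <;> rfl
      have hdpos : 0 < d := (dps_pos _).mpr hv0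
      have hb0 : b = 0 := by rw [hb, hu0]; simp
      have hc0 : c = 0 := by rw [hcv, hu0]; simp
      rw [hb0, hc0]
      have ha0 : a = 0 := by rw [ha, hu0]; simp
      rw [ha0]
      have := mul_pos hs hdpos
      nlinarith
    · have hapos : 0 < a := (dps_pos _).mpr hu0
      have hba : b ≤ N * a := key u
      have hrb : ρ * b < r * s * a := by
        rcases le_or_gt ρ 0 with hρ0 | hρ0
        · have : ρ * b ≤ 0 := mul_nonpos_of_nonpos_of_nonneg hρ0 hbnn
          have hrs0 : 0 < r * s * a := by positivity
          linarith
        · calc ρ * b ≤ 1 * b := by nlinarith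
            _ ≤ N * a := by linarith
            _ < r * s * a := by nlinarith
      -- total form = r*a - ρ*b/s + (1/s) * w⬝w
      have hs' : s ≠ 0 := ne_of_gt hs
      set F := r * a + ((θ - 1) ^ 2 - ρ) / s * b + 2 * (θ - 1) * c + s * d with hF
      have hform : s * F = (r * s * a - ρ * b)
          + ((θ - 1) ^ 2 * b + 2 * (θ - 1) * s * c + s ^ 2 * d) := by
        rw [hF]; field_simp; ring
      have hsF : 0 < s * F := by rw [hform]; linarith
      by_contra hFle
      push_neg at hFle
      exact absurd hsF (not_lt.mpr (mul_nonpos_of_nonneg_of_nonpos hs.le hFle))
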